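/- The set of zeros of the Choi–Lam quartic Q(x,y,z,w) = x²y² + y²z² + z²x² + w⁴ − 4xyzw on the unit sphere S³ ⊂ ℝ⁴ consists exactly of the 14 points ±(1,0,0,0), ±(0,1,0,0), ±(0,0,1,0), ±(1,−1,−1,1)/2, ±(−1,1,−1,1)/2, ±(−1,−1,1,1)/2, ±(1,1,1,1)/2; moreover any quadratic form P on ℝ⁴ vanishing at all these points is of the form a₁(xy−zw) + a₂(yz−xw) + a₃(zx−yw) and hence also vanishes at (0,0,0,1), which is not a zero of Q. In particular the zero set of Q is not cut out by quadratic forms. -/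

import Mathlib

open MvPolynomial

/-- The Choi–Lam quartic `Q(x,y,z,w) = x²y² + y²z² + z²x² + w⁴ − 4xyzw`. -/
noncomputable def QCL : MvPolynomial (Fin 4) ℝ :=
  X 0 ^ 2 * X 1 ^ 2 + X 1 ^ 2 * X 2 ^ 2 + X 2 ^ 2 * X 0 ^ 2 + X 3 ^ 4
    - 4 * X 0 * X 1 * X 2 * X 3

/-- The 14 spherical zeros of the Choi–Lam quartic. -/
def CLzeros : Set (Fin 4 → ℝ) :=
  {![1, 0, 0, 0], -![1, 0, 0, 0], ![0, 1, 0, 0], -![0, 1, 0, 0],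
    ![0, 0, 1, 0], -![0, 0, 1, 0],
    ![1/2, -1/2, -1/2, 1/2], -![1/2, -1/2, -1/2, 1/2],
    ![-1/2, 1/2, -1/2, 1/2], -![-1/2, 1/2, -1/2, 1/2],
    ![-1/2, -1/2, 1/2, 1/2], -![-1/2, -1/2, 1/2, 1/2],
    ![1/2, 1/2, 1/2, 1/2], -![1/2, 1/2, 1/2, 1/2]}

noncomputable def ee (i j : Fin 4) : Fin 4 →₀ ℕ := Finsupp.single i 1 + Finsupp.single j 1

lemma finsupp4_eq_iff (e f : Fin 4 →₀ ℕ) : e = f ↔ e 0 = f 0 ∧ e 1 = f 1 ∧ e 2 = f 2 ∧ e 3 = f 3 := by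
  constructor
  · rintro rfl; exact ⟨rfl, rfl, rfl, rfl⟩
  · rintro ⟨h0, h1, h2, h3⟩; ext k; fin_cases k <;> assumption

lemma degree4 (d : Fin 4 →₀ ℕ) : d.degree = d 0 + d 1 + d 2 + d 3 := by
  rw [Finsupp.degree, show d 0 + d 1 + d 2 + d 3 = ∑ i : Fin 4, d i from (Fin.sum_univ_four d).symm]
  exact Finset.sum_subset (Finset.subset_univ _) (fun i _ hi => Finsupp.notMem_support_iff.mp hi)

lemma ee_apply (i j k : Fin 4) : ee i j k = (if i = k then 1 else 0) + (if j = k then 1 else 0) := by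
  simp [ee, Finsupp.single_apply]

lemma ee_sum (i j : Fin 4) : ee i j 0 + ee i j 1 + ee i j 2 + ee i j 3 = 2 := by
  fin_cases i <;> fin_cases j <;> simp [ee_apply]

lemma CmulXX (a : ℝ) (i j : Fin 4) : C a * (X i * X j) = monomial (ee i j) a := by
  rw [X, X, monomial_mul, C_mul_monomial, ee]; ring_nf
lemma nat10 (a b c e : ℕ) (h : a + b + c + e = 2) : (a = 2 ∧ b = 0 ∧ c = 0 ∧ e = 0) ∨ (a = 0 ∧ b = 2 ∧ c = 0 ∧ e = 0) ∨ (a = 0 ∧ b = 0 ∧ c = 2 ∧ e = 0) ∨ (a = 0 ∧ b = 0 ∧ c = 0 ∧ e = 2) ∨ (a = 1 ∧ b = 1 ∧ c = 0 ∧ e = 0) ∨ (a = 1 ∧ b = 0 ∧ c = 1 ∧ e = 0) ∨ (a = 1 ∧ b = 0 ∧ c = 0 ∧ e = 1) ∨ (a = 0 ∧ b = 1 ∧ c = 1 ∧ e = 0) ∨ (a = 0 ∧ b = 1 ∧ c = 0 ∧ e = 1) ∨ (a = 0 ∧ b = 0 ∧ c = 1 ∧ e = 1) := by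
  have ha : a = 0 ∨ a = 1 ∨ a = 2 := by omega
  have hb : b = 0 ∨ b = 1 ∨ b = 2 := by omega
  have hc : c = 0 ∨ c = 1 ∨ c = 2 := by omega
  have he : e = 0 ∨ e = 1 ∨ e = 2 := by omega
  rcases ha with rfl|rfl|rfl <;> rcases hb with rfl|rfl|rfl <;> rcases hc with rfl|rfl|rfl <;> rcases he with rfl|rfl|rfl <;> simp_all


set_option maxHeartbeats 1000000 in
lemma decomp (P : MvPolynomial (Fin 4) ℝ) (hP : P.IsHomogeneous 2) :
    P = C (coeff (ee 0 0) P) * (X 0 * X 0) + C (coeff (ee 1 1) P) * (X 1 * X 1)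
      + C (coeff (ee 2 2) P) * (X 2 * X 2) + C (coeff (ee 3 3) P) * (X 3 * X 3)
      + C (coeff (ee 0 1) P) * (X 0 * X 1) + C (coeff (ee 0 2) P) * (X 0 * X 2)
      + C (coeff (ee 0 3) P) * (X 0 * X 3) + C (coeff (ee 1 2) P) * (X 1 * X 2)
      + C (coeff (ee 1 3) P) * (X 1 * X 3) + C (coeff (ee 2 3) P) * (X 2 * X 3) := by
  ext d
  simp only [CmulXX, coeff_add, coeff_monomial]
  by_cases hd : d 0 + d 1 + d 2 + d 3 = 2
  · rcases nat10 _ _ _ _ hd with ⟨h0,h1,h2,h3⟩|⟨h0,h1,h2,h3⟩|⟨h0,h1,h2,h3⟩|⟨h0,h1,h2,h3⟩|⟨h0,h1,h2,h3⟩|⟨h0,h1,h2,h3⟩|⟨h0,h1,h2,h3⟩|⟨h0,h1,h2,h3⟩|⟨h0,h1,h2,h3⟩|⟨h0,h1,h2,h3⟩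
    · have hde : d = ee 0 0 := by
        rw [finsupp4_eq_iff, h0, h1, h2, h3]; refine ⟨?_, ?_, ?_, ?_⟩ <;> rw [ee_apply] <;> decide
      rw [hde]
      simp only [finsupp4_eq_iff, ee_apply]
      simp (config := { decide := true })
    · have hde : d = ee 1 1 := by
        rw [finsupp4_eq_iff, h0, h1, h2, h3]; refine ⟨?_, ?_, ?_, ?_⟩ <;> rw [ee_apply] <;> decide
      rw [hde]
      simp only [finsupp4_eq_iff, ee_apply]
      simp (config := { decide := true })
    · have hde : d = ee 2 2 := by
        rw [finsupp4_eq_iff, h0, h1, h2, h3]; refine ⟨?_, ?_, ?_, ?_⟩ <;> rw [ee_apply] <;> decide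
      rw [hde]
      simp only [finsupp4_eq_iff, ee_apply]
      simp (config := { decide := true })
    · have hde : d = ee 3 3 := by
        rw [finsupp4_eq_iff, h0, h1, h2, h3]; refine ⟨?_, ?_, ?_, ?_⟩ <;> rw [ee_apply] <;> decide
      rw [hde]
      simp only [finsupp4_eq_iff, ee_apply]
      simp (config := { decide := true })
    · have hde : d = ee 0 1 := by
        rw [finsupp4_eq_iff, h0, h1, h2, h3]; refine ⟨?_, ?_, ?_, ?_⟩ <;> rw [ee_apply] <;> decide
      rw [hde]
      simp only [finsupp4_eq_iff, ee_apply]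
      simp (config := { decide := true })
    · have hde : d = ee 0 2 := by
        rw [finsupp4_eq_iff, h0, h1, h2, h3]; refine ⟨?_, ?_, ?_, ?_⟩ <;> rw [ee_apply] <;> decide
      rw [hde]
      simp only [finsupp4_eq_iff, ee_apply]
      simp (config := { decide := true })
    · have hde : d = ee 0 3 := by
        rw [finsupp4_eq_iff, h0, h1, h2, h3]; refine ⟨?_, ?_, ?_, ?_⟩ <;> rw [ee_apply] <;> decide
      rw [hde]
      simp only [finsupp4_eq_iff, ee_apply]
      simp (config := { decide := true })
    · have hde : d = ee 1 2 := by
        rw [finsupp4_eq_iff, h0, h1, h2, h3]; refine ⟨?_, ?_, ?_, ?_⟩ <;> rw [ee_apply] <;> decide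
      rw [hde]
      simp only [finsupp4_eq_iff, ee_apply]
      simp (config := { decide := true })
    · have hde : d = ee 1 3 := by
        rw [finsupp4_eq_iff, h0, h1, h2, h3]; refine ⟨?_, ?_, ?_, ?_⟩ <;> rw [ee_apply] <;> decide
      rw [hde]
      simp only [finsupp4_eq_iff, ee_apply]
      simp (config := { decide := true })
    · have hde : d = ee 2 3 := by
        rw [finsupp4_eq_iff, h0, h1, h2, h3]; refine ⟨?_, ?_, ?_, ?_⟩ <;> rw [ee_apply] <;> decide
      rw [hde]
      simp only [finsupp4_eq_iff, ee_apply]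
      simp (config := { decide := true })
  · have hne : ∀ i j : Fin 4, ¬ (ee i j = d) := fun i j h => hd (by rw [← h]; exact ee_sum i j)
    rw [if_neg (hne 0 0), if_neg (hne 1 1), if_neg (hne 2 2), if_neg (hne 3 3), if_neg (hne 0 1),
      if_neg (hne 0 2), if_neg (hne 0 3), if_neg (hne 1 2), if_neg (hne 1 3), if_neg (hne 2 3)]
    simp [hP.coeff_eq_zero (by rw [degree4]; exact hd)]

lemma eval_decomp (P : MvPolynomial (Fin 4) ℝ) (hP : P.IsHomogeneous 2) (v : Fin 4 → ℝ) :
    eval v P = coeff (ee 0 0) P * (v 0 * v 0) + coeff (ee 1 1) P * (v 1 * v 1)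
      + coeff (ee 2 2) P * (v 2 * v 2) + coeff (ee 3 3) P * (v 3 * v 3)
      + coeff (ee 0 1) P * (v 0 * v 1) + coeff (ee 0 2) P * (v 0 * v 2)
      + coeff (ee 0 3) P * (v 0 * v 3) + coeff (ee 1 2) P * (v 1 * v 2)
      + coeff (ee 1 3) P * (v 1 * v 3) + coeff (ee 2 3) P * (v 2 * v 3) := by
  conv_lhs => rw [decomp P hP]
  simp only [map_add, map_mul, eval_C, eval_X]

lemma part2 (P : MvPolynomial (Fin 4) ℝ) (hP : P.IsHomogeneous 2)
    (hv : ∀ v ∈ CLzeros, eval v P = 0) :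
    (∃ a₁ a₂ a₃ : ℝ,
      P = C a₁ * (X 0 * X 1 - X 2 * X 3) + C a₂ * (X 1 * X 2 - X 0 * X 3)
          + C a₃ * (X 2 * X 0 - X 1 * X 3))
    ∧ eval ![0, 0, 0, 1] P = 0 := by
  have m1 : (![1, 0, 0, 0] : Fin 4 → ℝ) ∈ CLzeros := by simp [CLzeros]
  have m2 : (![0, 1, 0, 0] : Fin 4 → ℝ) ∈ CLzeros := by simp [CLzeros]
  have m3 : (![0, 0, 1, 0] : Fin 4 → ℝ) ∈ CLzeros := by simp [CLzeros]
  have m4 : (![1/2, -1/2, -1/2, 1/2] : Fin 4 → ℝ) ∈ CLzeros := by simp [CLzeros]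
  have m5 : (![-1/2, 1/2, -1/2, 1/2] : Fin 4 → ℝ) ∈ CLzeros := by simp [CLzeros]
  have m6 : (![-1/2, -1/2, 1/2, 1/2] : Fin 4 → ℝ) ∈ CLzeros := by simp [CLzeros]
  have m7 : (![1/2, 1/2, 1/2, 1/2] : Fin 4 → ℝ) ∈ CLzeros := by simp [CLzeros]
  have e1 := hv _ m1; have e2 := hv _ m2; have e3 := hv _ m3
  have e4 := hv _ m4; have e5 := hv _ m5; have e6 := hv _ m6; have e7 := hv _ m7
  rw [eval_decomp P hP] at e1 e2 e3 e4 e5 e6 e7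
  norm_num [Matrix.cons_val_zero, Matrix.cons_val_one, Matrix.head_cons, Matrix.cons_val_two, Matrix.cons_val_three, Matrix.tail_cons, Matrix.head_cons] at e1 e2 e3 e4 e5 e6 e7
  set c00 := coeff (ee 0 0) P; set c11 := coeff (ee 1 1) P; set c22 := coeff (ee 2 2) P
  set c33 := coeff (ee 3 3) P; set c01 := coeff (ee 0 1) P; set c02 := coeff (ee 0 2) P
  set c03 := coeff (ee 0 3) P; set c12 := coeff (ee 1 2) P; set c13 := coeff (ee 1 3) P
  set c23 := coeff (ee 2 3) P
  have h33 : c33 = 0 := by linarith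
  have h23 : c23 = -c01 := by linarith
  have h03 : c03 = -c12 := by linarith
  have h13 : c13 = -c02 := by linarith
  constructor
  · refine ⟨c01, c12, c02, ?_⟩
    rw [decomp P hP]
    rw [show coeff (ee 0 0) P = c00 from rfl, show coeff (ee 1 1) P = c11 from rfl,
        show coeff (ee 2 2) P = c22 from rfl, show coeff (ee 3 3) P = c33 from rfl,
        show coeff (ee 0 1) P = c01 from rfl, show coeff (ee 0 2) P = c02 from rfl,
        show coeff (ee 0 3) P = c03 from rfl, show coeff (ee 1 2) P = c12 from rfl,
        show coeff (ee 1 3) P = c13 from rfl, show coeff (ee 2 3) P = c23 from rfl,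
        e1, e2, e3, h33, h23, h03, h13]
    simp only [map_zero, map_neg]
    ring
  · rw [eval_decomp P hP]
    norm_num [Matrix.cons_val_zero, Matrix.cons_val_one, Matrix.head_cons, Matrix.cons_val_two, Matrix.cons_val_three, Matrix.tail_cons, Matrix.head_cons]
    rw [show coeff (ee 3 3) P = c33 from rfl, h33]

lemma vecext (a b c d a' b' c' d' : ℝ) : ![a,b,c,d] = ![a',b',c',d'] ↔ a=a' ∧ b=b' ∧ c=c' ∧ d=d' := by
  constructor
  · intro h; exact ⟨congrFun h 0, congrFun h 1, congrFun h 2, congrFun h 3⟩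
  · rintro ⟨rfl,rfl,rfl,rfl⟩; rfl

lemma vec_eq4 (v : Fin 4 → ℝ) {a b c d : ℝ} (h0 : v 0 = a) (h1 : v 1 = b) (h2 : v 2 = c)
    (h3 : v 3 = d) : v = ![a,b,c,d] := by
  funext i; fin_cases i <;> simp [h0, h1, h2, h3]


lemma evalQ (v : Fin 4 → ℝ) : eval v QCL
    = v 0^2*v 1^2 + v 1^2*v 2^2 + v 2^2*v 0^2 + v 3^4 - 4*(v 0*v 1*v 2*v 3) := by
  simp [QCL]; ring

lemma zeros_eval (v : Fin 4 → ℝ) (hv : v ∈ CLzeros) : eval v QCL = 0 := by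
  simp only [CLzeros, Set.mem_insert_iff, Set.mem_singleton_iff] at hv
  rcases hv with rfl|rfl|rfl|rfl|rfl|rfl|rfl|rfl|rfl|rfl|rfl|rfl|rfl|rfl <;>
    rw [evalQ] <;> norm_num [Matrix.cons_val_two, Matrix.cons_val_three, Matrix.tail_cons, Matrix.head_cons]

lemma zeros_sphere (v : Fin 4 → ℝ) (hv : v ∈ CLzeros) : ∑ i, v i ^ 2 = 1 := by
  simp only [CLzeros, Set.mem_insert_iff, Set.mem_singleton_iff] at hv
  rcases hv with rfl|rfl|rfl|rfl|rfl|rfl|rfl|rfl|rfl|rfl|rfl|rfl|rfl|rfl <;>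
    norm_num [Fin.sum_univ_four, Matrix.cons_val_two, Matrix.cons_val_three, Matrix.tail_cons, Matrix.head_cons]

set_option maxHeartbeats 2000000 in
lemma forward (x y z w : ℝ) (hs : x^2+y^2+z^2+w^2 = 1)
    (hQ : x^2*y^2 + y^2*z^2 + z^2*x^2 + w^4 = 4*(x*y*z*w)) :
    (x=1∧y=0∧z=0∧w=0) ∨ (x=-1∧y=0∧z=0∧w=0) ∨
    (x=0∧y=1∧z=0∧w=0) ∨ (x=0∧y=-1∧z=0∧w=0) ∨
    (x=0∧y=0∧z=1∧w=0) ∨ (x=0∧y=0∧z=-1∧w=0) ∨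
    (x=1/2∧y=-1/2∧z=-1/2∧w=1/2) ∨ (x=-1/2∧y=1/2∧z=1/2∧w=-1/2) ∨
    (x=-1/2∧y=1/2∧z=-1/2∧w=1/2) ∨ (x=1/2∧y=-1/2∧z=1/2∧w=-1/2) ∨
    (x=-1/2∧y=-1/2∧z=1/2∧w=1/2) ∨ (x=1/2∧y=1/2∧z=-1/2∧w=-1/2) ∨
    (x=1/2∧y=1/2∧z=1/2∧w=1/2) ∨ (x=-1/2∧y=-1/2∧z=-1/2∧w=-1/2) := by
  have hm : 0 ≤ x*y*z*w := by nlinarith [sq_nonneg (x*y), sq_nonneg (y*z), sq_nonneg (z*x), sq_nonneg (w^2)]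
  by_cases hw : w = 0
  · subst hw
    have hxy : x*y = 0 := by nlinarith [sq_nonneg (x*y), sq_nonneg (y*z), sq_nonneg (z*x)]
    have hyz : y*z = 0 := by nlinarith [sq_nonneg (x*y), sq_nonneg (y*z), sq_nonneg (z*x)]
    have hzx : z*x = 0 := by nlinarith [sq_nonneg (x*y), sq_nonneg (y*z), sq_nonneg (z*x)]
    by_cases hx : x = 0
    · by_cases hy : y = 0
      · by_cases hz : z = 0
        · exfalso; rw [hx, hy, hz] at hs; norm_num at hs
        · have hz2 : z = 1 ∨ z = -1 := by
            rcases mul_eq_zero.mp (show (z-1)*(z+1) = 0 by nlinarith) with h|h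
            · left; linarith
            · right; linarith
          subst hx; subst hy
          rcases hz2 with rfl | rfl <;> norm_num
      · have hz : z = 0 := (mul_eq_zero.mp hyz).resolve_left hy
        have hy2 : y = 1 ∨ y = -1 := by
          rcases mul_eq_zero.mp (show (y-1)*(y+1) = 0 by nlinarith) with h|h
          · left; linarith
          · right; linarith
        subst hx; subst hz
        rcases hy2 with rfl | rfl <;> norm_num
    · have hy : y = 0 := (mul_eq_zero.mp hxy).resolve_left hx
      have hz : z = 0 := (mul_eq_zero.mp hzx).resolve_right hx
      have hx2 : x = 1 ∨ x = -1 := by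
        rcases mul_eq_zero.mp (show (x-1)*(x+1) = 0 by nlinarith) with h|h
        · left; linarith
        · right; linarith
      subst hy; subst hz
      rcases hx2 with rfl | rfl <;> norm_num
  · -- w ≠ 0
    have hw4 : 0 < w^4 := by positivity
    have hmpos : 0 < x*y*z*w := by
      rcases eq_or_lt_of_le hm with h|h
      · exfalso
        nlinarith [sq_nonneg (x*y), sq_nonneg (y*z), sq_nonneg (z*x)]
      · exact h
    have key : (x^2*y^2 + y^2*z^2 - z^2*x^2 - w^4)^2 + 4*((x*y)*(z*x) - (y*z)*w^2)^2
        + 4*((x*y)*w^2 - (y*z)*(z*x))^2 = 0 := by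
      linear_combination (x^2*y^2 + y^2*z^2 + z^2*x^2 + w^4 + 4*(x*y*z*w)) * hQ
    have k1 : x^2*y^2 + y^2*z^2 - z^2*x^2 - w^4 = 0 := by
      have : (x^2*y^2 + y^2*z^2 - z^2*x^2 - w^4)^2 = 0 := by
        nlinarith [sq_nonneg ((x*y)*(z*x) - (y*z)*w^2), sq_nonneg ((x*y)*w^2 - (y*z)*(z*x))]
      exact sq_eq_zero_iff.mp this
    have k2 : (x*y)*(z*x) - (y*z)*w^2 = 0 := by
      have : ((x*y)*(z*x) - (y*z)*w^2)^2 = 0 := by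
        nlinarith [sq_nonneg (x^2*y^2 + y^2*z^2 - z^2*x^2 - w^4), sq_nonneg ((x*y)*w^2 - (y*z)*(z*x))]
      exact sq_eq_zero_iff.mp this
    have k3 : (x*y)*w^2 - (y*z)*(z*x) = 0 := by
      have : ((x*y)*w^2 - (y*z)*(z*x))^2 = 0 := by
        nlinarith [sq_nonneg (x^2*y^2 + y^2*z^2 - z^2*x^2 - w^4), sq_nonneg ((x*y)*(z*x) - (y*z)*w^2)]
      exact sq_eq_zero_iff.mp this
    have hyz0 : y*z ≠ 0 := by
      intro h
      rw [show x*y*z*w = (y*z)*(x*w) by ring, h, zero_mul] at hmpos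
      exact lt_irrefl 0 hmpos
    have hxy0 : x*y ≠ 0 := by
      intro h
      rw [show x*y*z*w = (x*y)*(z*w) by ring, h, zero_mul] at hmpos
      exact lt_irrefl 0 hmpos
    have hx2 : x^2 = w^2 := by
      have h2 : (y*z) * (x^2 - w^2) = 0 := by linear_combination k2
      rcases mul_eq_zero.mp h2 with h|h
      · exact absurd h hyz0
      · linarith
    have hz2 : z^2 = w^2 := by
      have h2 : (x*y) * (w^2 - z^2) = 0 := by linear_combination k3
      rcases mul_eq_zero.mp h2 with h|h
      · exact absurd h hxy0
      · linarith
    have hw2pos : 0 < w^2 := by positivity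
    have hy2 : y^2 = w^2 := by
      have h2 : (2*w^2)*(y^2 - w^2) = 0 := by
        linear_combination k1 - y^2*hx2 - y^2*hz2 + x^2*hz2 + w^2*hx2
      rcases mul_eq_zero.mp h2 with h|h
      · exfalso; nlinarith
      · linarith
    have hw2 : w^2 = 1/4 := by linarith [hs, hx2, hy2, hz2]
    have hxv : x = 1/2 ∨ x = -(1/2) := by
      rcases mul_eq_zero.mp (show (x-1/2)*(x+1/2) = 0 by linear_combination hx2 + hw2) with h|h
      · left; linarith
      · right; linarith
    have hyv : y = 1/2 ∨ y = -(1/2) := by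
      rcases mul_eq_zero.mp (show (y-1/2)*(y+1/2) = 0 by linear_combination hy2 + hw2) with h|h
      · left; linarith
      · right; linarith
    have hzv : z = 1/2 ∨ z = -(1/2) := by
      rcases mul_eq_zero.mp (show (z-1/2)*(z+1/2) = 0 by linear_combination hz2 + hw2) with h|h
      · left; linarith
      · right; linarith
    have hwv : w = 1/2 ∨ w = -(1/2) := by
      rcases mul_eq_zero.mp (show (w-1/2)*(w+1/2) = 0 by linear_combination hw2) with h|h
      · left; linarith
      · right; linarith
    rcases hxv with rfl|rfl <;> rcases hyv with rfl|rfl <;> rcases hzv with rfl|rfl <;>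
      rcases hwv with rfl|rfl <;> norm_num at hmpos <;> norm_num

lemma part1 (v : Fin 4 → ℝ) (hs : ∑ i, v i ^ 2 = 1) : eval v QCL = 0 ↔ v ∈ CLzeros := by
  constructor
  · intro h0
    rw [evalQ] at h0
    rw [Fin.sum_univ_four] at hs
    rcases forward (v 0) (v 1) (v 2) (v 3) hs (by linarith) with
      ⟨e0,e1,e2,e3⟩|⟨e0,e1,e2,e3⟩|⟨e0,e1,e2,e3⟩|⟨e0,e1,e2,e3⟩|⟨e0,e1,e2,e3⟩|⟨e0,e1,e2,e3⟩|⟨e0,e1,e2,e3⟩|⟨e0,e1,e2,e3⟩|⟨e0,e1,e2,e3⟩|⟨e0,e1,e2,e3⟩|⟨e0,e1,e2,e3⟩|⟨e0,e1,e2,e3⟩|⟨e0,e1,e2,e3⟩|⟨e0,e1,e2,e3⟩ <;>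
    · rw [vec_eq4 v e0 e1 e2 e3]
      simp only [CLzeros, Set.mem_insert_iff, Set.mem_singleton_iff, Matrix.neg_cons,
        Matrix.neg_empty, neg_zero, vecext]
      norm_num
  · exact zeros_eval v

/-- The spherical zero set of the Choi–Lam quartic `Q` consists exactly of 14 points;
any quadratic form vanishing at all of them is `a₁(xy−zw) + a₂(yz−xw) + a₃(zx−yw)` and
hence also vanishes at `(0,0,0,1)`, which is not a zero of `Q`. In particular the zero
set of `Q` is not cut out on the sphere by quadratic forms. -/
theorem stmt19 :
    (∀ v : Fin 4 → ℝ, (∑ i, v i ^ 2 = 1) → (eval v QCL = 0 ↔ v ∈ CLzeros))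
    ∧ (∀ P : MvPolynomial (Fin 4) ℝ, P.IsHomogeneous 2 →
        (∀ v ∈ CLzeros, eval v P = 0) →
        (∃ a₁ a₂ a₃ : ℝ,
          P = C a₁ * (X 0 * X 1 - X 2 * X 3) + C a₂ * (X 1 * X 2 - X 0 * X 3)
              + C a₃ * (X 2 * X 0 - X 1 * X 3))
        ∧ eval ![0, 0, 0, 1] P = 0)
    ∧ eval ![0, 0, 0, 1] QCL ≠ 0
    ∧ ¬ ∃ S : Set (MvPolynomial (Fin 4) ℝ), (∀ p ∈ S, p.IsHomogeneous 2) ∧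
        {v : Fin 4 → ℝ | (∑ i, v i ^ 2 = 1) ∧ eval v QCL = 0}
          = {v : Fin 4 → ℝ | (∑ i, v i ^ 2 = 1) ∧ ∀ p ∈ S, eval v p = 0} := by
  refine ⟨part1, fun P hP hv => part2 P hP hv, ?_, ?_⟩
  · rw [evalQ]; norm_num [Matrix.cons_val_two, Matrix.cons_val_three, Matrix.tail_cons, Matrix.head_cons]
  · rintro ⟨S, hS2, hSet⟩
    have h4 : eval ![0, 0, 0, 1] QCL ≠ 0 := by rw [evalQ]; norm_num [Matrix.cons_val_two, Matrix.cons_val_three, Matrix.tail_cons, Matrix.head_cons]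
    have hsph : (∑ i, (![0, 0, 0, 1] : Fin 4 → ℝ) i ^ 2) = 1 := by
      norm_num [Fin.sum_univ_four, Matrix.cons_val_two, Matrix.cons_val_three, Matrix.tail_cons, Matrix.head_cons]
    have hvan : ∀ p ∈ S, ∀ u ∈ CLzeros, eval u p = 0 := by
      intro p hp u hu
      have hmem : u ∈ {v : Fin 4 → ℝ | (∑ i, v i ^ 2 = 1) ∧ ∀ p ∈ S, eval v p = 0} := by
        rw [← hSet]; exact ⟨zeros_sphere u hu, zeros_eval u hu⟩
      exact hmem.2 p hp
    have h40 : ∀ p ∈ S, eval ![0, 0, 0, 1] p = 0 :=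
      fun p hp => (part2 p (hS2 p hp) (hvan p hp)).2
    have hfin : (![0, 0, 0, 1] : Fin 4 → ℝ) ∈
        {v : Fin 4 → ℝ | (∑ i, v i ^ 2 = 1) ∧ eval v QCL = 0} := by
      rw [hSet]; exact ⟨hsph, h40⟩
    exact h4 hfin.2
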